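/- Multiplicative Chernoff bound for geometric variables (lower tail, small mean): let X₁,...,X_n be i.i.d. geometric random variables on {0,1,2,...} with mean μ ∈ (0,1]. Then for any δ ∈ (0,1), P((1/n)∑ X_i < (1−δ)μ) ≤ exp(−(nδ²μ/(6(1+μ)²))·(3 − 2δμ/(1+μ))). -/

import Mathlib

open ProbabilityTheory MeasureTheory

section AuxLemmas

open Real Filter Finset


lemma sum3_eq {x : ℝ} : (∑ i ∈ Finset.range 3, x ^ (i+1) / (i+1)) = x + x^2/2 + x^3/3 := by
  norm_num [Finset.sum_range_succ]

lemma tendsto_aux {x : ℝ} (h0 : 0 ≤ x) (h1 : x < 1) :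
    Tendsto (fun m : ℕ => x^(m+4)/(1-x)) atTop (nhds 0) := by
  have he : (fun m : ℕ => x^(m+4)/(1-x)) = fun m : ℕ => x^m * (x^4/(1-x)) := by
    funext m; rw [pow_add]; ring
  rw [he]
  simpa using (tendsto_pow_atTop_nhds_zero_of_lt_one h0 h1).mul_const (x^4/(1-x))

lemma log_one_sub_lower {x : ℝ} (h0 : 0 ≤ x) (h1 : x < 1) :
    x + x^2/2 + x^3/3 ≤ -Real.log (1 - x) := by
  have hax : |x| = x := abs_of_nonneg h0
  have key : ∀ m : ℕ, x + x^2/2 + x^3/3 - x^(m+4)/(1-x) ≤ -Real.log (1 - x) := by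
    intro m
    have h := Real.abs_log_sub_add_sum_range_le (by rwa [hax]) (m+3)
    rw [hax, show (m+3)+1 = m+4 by omega] at h
    have h2 := (abs_le.1 h).2
    have h3 : (∑ i ∈ Finset.range 3, x ^ (i+1) / (i+1))
        ≤ ∑ i ∈ Finset.range (m+3), x ^ (i+1) / (i+1) := by
      apply Finset.sum_le_sum_of_subset_of_nonneg
      · exact Finset.range_subset_range.2 (by omega)
      · intro i _ _; positivity
    rw [sum3_eq] at h3
    linarith
  have T : Tendsto (fun m : ℕ => x + x^2/2 + x^3/3 - x^(m+4)/(1-x)) atTop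
      (nhds (x + x^2/2 + x^3/3 - 0)) := (tendsto_aux h0 h1).const_sub _
  have := le_of_tendsto' T key
  simpa using this

lemma partial_sum_le {x : ℝ} (h0 : 0 ≤ x) (h1 : x < 1) (m : ℕ) :
    (∑ i ∈ Finset.range (m+3), x ^ (i+1) / (i+1))
      ≤ x + x^2/2 + x^3/3 + (x^4 - x^(m+4)) / (4*(1-x)) := by
  have h1x : (0:ℝ) < 1 - x := by linarith
  induction m with
  | zero => rw [sum3_eq]; norm_num
  | succ m ih =>
    rw [show m+1+3 = (m+3)+1 by omega, Finset.sum_range_succ]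
    have hterm : x ^ ((m+3)+1) / (((m+3):ℕ) + 1) ≤ x^(m+4)/4 := by
      rw [show (m+3)+1 = m+4 by omega]
      gcongr
      push_cast; linarith
    have hid : (x^4 - x^(m+4))/(4*(1-x)) + x^(m+4)/4 = (x^4 - x^(m+1+4))/(4*(1-x)) := by
      field_simp
      ring
    push_cast at hterm ⊢
    linarith
  
lemma log_one_sub_upper {x : ℝ} (h0 : 0 ≤ x) (h1 : x < 1) :
    -Real.log (1 - x) ≤ x + x^2/2 + x^3/3 + x^4/(4*(1-x)) := by
  have hax : |x| = x := abs_of_nonneg h0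
  have h1x : (0:ℝ) < 1 - x := by linarith
  have key : ∀ m : ℕ, -Real.log (1 - x)
      ≤ x + x^2/2 + x^3/3 + x^4/(4*(1-x)) + x^(m+4)/(1-x) := by
    intro m
    have h := Real.abs_log_sub_add_sum_range_le (by rwa [hax]) (m+3)
    rw [hax, show (m+3)+1 = m+4 by omega] at h
    have h2 := (abs_le.1 h).1
    have h3 := partial_sum_le h0 h1 m
    have hx4 : (x^4 - x^(m+4))/(4*(1-x)) ≤ x^4/(4*(1-x)) := by
      gcongr
      nlinarith [pow_nonneg h0 (m+4)]
    linarith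
  have T : Tendsto (fun m : ℕ => x + x^2/2 + x^3/3 + x^4/(4*(1-x)) + x^(m+4)/(1-x)) atTop
      (nhds (x + x^2/2 + x^3/3 + x^4/(4*(1-x)) + 0)) := (tendsto_aux h0 h1).const_add _
  have := ge_of_tendsto' T key
  simpa using this


lemma key_ineq {δ μ : ℝ} (hδ0 : 0 < δ) (hδ1 : δ < 1) (hμ0 : 0 < μ) (hμ1 : μ ≤ 1) :
    μ*((1-δ)*(δ+δ^2/2+δ^3/3) + δ^4/4)
      - (1+(1-δ)*μ)*(δ*μ/(1+μ) + (δ*μ/(1+μ))^2/2 + (δ*μ/(1+μ))^3/3)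
    ≤ -((δ^2*μ)/(6*(1+μ)^2))*(3 - 2*δ*μ/(1+μ)) := by
  have h1μ : (0:ℝ) < 1+μ := by linarith
  have h1μ' : (1+μ) ≠ 0 := ne_of_gt h1μ
  rw [← sub_nonneg]
  have hQ : -((δ^2*μ)/(6*(1+μ)^2))*(3 - 2*δ*μ/(1+μ))
      - (μ*((1-δ)*(δ+δ^2/2+δ^3/3) + δ^4/4)
        - (1+(1-δ)*μ)*(δ*μ/(1+μ) + (δ*μ/(1+μ))^2/2 + (δ*μ/(1+μ))^3/3))
      = (δ^2*μ*(6*μ+12*μ^2+6*μ^3+2*δ+12*δ*μ+14*δ*μ^2+4*δ*μ^3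
          +δ^2+4*δ^2*μ+6*δ^2*μ^2-3*δ^2*μ^4)) / (12*(1+μ)^4) := by
    field_simp
    ring
  rw [hQ]
  apply div_nonneg _ (by positivity)
  apply mul_nonneg (by positivity)
  have hh2 : (0:ℝ) ≤ δ^2*μ^2*(1-μ^2) := by
    apply mul_nonneg (by positivity); nlinarith
  nlinarith [hh2, mul_nonneg hδ0.le hμ0.le, mul_nonneg (mul_nonneg hδ0.le hμ0.le) hμ0.le,
    mul_nonneg (mul_nonneg (mul_nonneg hδ0.le hμ0.le) hμ0.le) hμ0.le,
    mul_nonneg (mul_nonneg hδ0.le hδ0.le) hμ0.le, sq_nonneg δ,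
    mul_nonneg (mul_nonneg (mul_nonneg hδ0.le hδ0.le) hμ0.le) hμ0.le]

lemma exponent_ineq {δ μ : ℝ} (hδ0 : 0 < δ) (hδ1 : δ < 1) (hμ0 : 0 < μ) (hμ1 : μ ≤ 1) :
    -((1-δ)*μ) * Real.log (1-δ) + (1+(1-δ)*μ) * Real.log (1 - δ*μ/(1+μ))
      ≤ -((δ^2*μ)/(6*(1+μ)^2))*(3 - 2*δ*μ/(1+μ)) := by
  have h1μ : (0:ℝ) < 1+μ := by linarith
  set v := δ*μ/(1+μ) with hv
  have hv0 : 0 ≤ v := by positivity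
  have hvδ : v < δ := by
    rw [hv, div_lt_iff₀ h1μ]
    nlinarith
  have hv1 : v < 1 := lt_trans hvδ hδ1
  have hδ1' : (0:ℝ) < 1 - δ := by linarith
  have hB := log_one_sub_upper hδ0.le hδ1
  have hA := log_one_sub_lower hv0 hv1
  have hν0 : (0:ℝ) < 1 + (1-δ)*μ := by nlinarith
  have h1 : -((1-δ)*μ) * Real.log (1-δ) ≤ μ*((1-δ)*(δ+δ^2/2+δ^3/3) + δ^4/4) := by
    have e1 : -((1-δ)*μ) * Real.log (1-δ) = ((1-δ)*μ) * (-Real.log (1-δ)) := by ring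
    rw [e1]
    have h2 := mul_le_mul_of_nonneg_left hB (by positivity : (0:ℝ) ≤ (1-δ)*μ)
    have e2 : (1-δ)*μ * (δ + δ^2/2 + δ^3/3 + δ^4/(4*(1-δ)))
        = μ*((1-δ)*(δ+δ^2/2+δ^3/3) + δ^4/4) := by
      field_simp
    linarith
  have h2 : (1+(1-δ)*μ) * Real.log (1 - v) ≤ -((1+(1-δ)*μ) * (v + v^2/2 + v^3/3)) := by
    have := mul_le_mul_of_nonneg_left hA hν0.le
    nlinarith
  have h3 := key_ineq hδ0 hδ1 hμ0 hμ1
  calc -((1-δ)*μ) * Real.log (1-δ) + (1+(1-δ)*μ) * Real.log (1 - v)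
      ≤ μ*((1-δ)*(δ+δ^2/2+δ^3/3) + δ^4/4) - ((1+(1-δ)*μ) * (v + v^2/2 + v^3/3)) := by
        linarith
    _ ≤ -((δ^2*μ)/(6*(1+μ)^2))*(3 - 2*δ*μ/(1+μ)) := by rw [hv] at *; linarith

end AuxLemmas

/-- Multiplicative Chernoff bound for geometric random variables (lower tail, small
mean): if `X₁,…,Xₙ` are i.i.d. geometric on `{0,1,2,...}` with mean `μ = (1−p)/p ≤ 1`,
then for any `δ ∈ (0,1)`,
`P((1/n)∑Xᵢ < (1−δ)μ) ≤ exp(−(nδ²μ/(6(1+μ)²))(3 − 2δμ/(1+μ)))`. -/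
theorem geometric_chernoff_lower_small_mean {Ω : Type*} [MeasurableSpace Ω]
    (P : Measure Ω) [IsProbabilityMeasure P] (n : ℕ) (hn : 0 < n)
    (X : Fin n → Ω → ℕ) (p : ℝ) (hp : p ∈ Set.Ioo (0 : ℝ) 1)
    (hindep : iIndepFun X P)
    (hdist : ∀ i m, P {ω | X i ω = m} = ENNReal.ofReal ((1 - p) ^ m * p))
    (μ : ℝ) (hμ : μ = (1 - p) / p) (hμ0 : 0 < μ) (hμ1 : μ ≤ 1)
    (δ : ℝ) (hδ0 : 0 < δ) (hδ1 : δ < 1) :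
    P {ω | (∑ i, (X i ω : ℝ)) / n < (1 - δ) * μ}
      ≤ ENNReal.ofReal
          (Real.exp (-((n * δ ^ 2 * μ) / (6 * (1 + μ) ^ 2))
            * (3 - 2 * δ * μ / (1 + μ)))) := by
  obtain ⟨hp0, hp1⟩ := hp
  have h1μ : (0:ℝ) < 1 + μ := by linarith
  have hpinv : p = 1/(1+μ) := by
    rw [hμ]; field_simp; ring
  set q : ℝ := 1 - p with hqdef
  have hq0 : 0 ≤ q := by simp [hqdef]; linarith
  have hqμ : q = μ * p := by rw [hqdef, hμ]; field_simp; exact hqdef.symm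
  set ν : ℝ := (1-δ)*μ with hνdef
  have hν0 : 0 < 1 + ν := by nlinarith
  set v : ℝ := δ*μ/(1+μ) with hvdef
  have hv0 : 0 ≤ v := by positivity
  have hδ1' : (0:ℝ) < 1 - δ := by linarith
  have hvδ : v < δ := by
    rw [hvdef, div_lt_iff₀ h1μ]; nlinarith
  have h1v : (0:ℝ) < 1 - v := by linarith
  have hpν : p * (1+ν) = 1 - v := by
    rw [hpinv, hνdef, hvdef]; field_simp; ring
  set s : ℝ := (1-δ)/(1-v) with hsdef
  have hs0 : 0 < s := by positivity
  have hs1 : s ≤ 1 := by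
    rw [hsdef, div_le_one h1v]; linarith
  set t : ℝ := -Real.log s with htdef
  have ht0 : 0 ≤ t := by
    rw [htdef, neg_nonneg]; exact Real.log_nonpos hs0.le hs1
  have hexp : Real.exp (-t) = s := by rw [htdef, neg_neg, Real.exp_log hs0]
  set r : ℝ := q * s with hrdef
  have hr0 : 0 ≤ r := mul_nonneg hq0 hs0.le
  have hr_eq : r = ν/(1+ν) := by
    rw [hrdef, hsdef, hqμ, ← hpν]
    rw [eq_div_iff (ne_of_gt hν0)]
    field_simp
    ring
  have hr1 : r < 1 := by
    rw [hr_eq, div_lt_one hν0]; linarith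
  set a : ℝ := (n:ℝ) * ((1-δ)*μ) with hadef
  set K : ℕ := ⌈a⌉₊ with hKdef
  set F : (Fin n → ℕ) → ℝ := fun m => ∏ i, (q^(m i) * p) with hFdef
  set G : (Fin n → ℕ) → ℝ := fun m => ∏ i, (r^(m i) * p) with hGdef
  -- measure-theoretic part
  have hval : ∀ m : Fin n → ℕ, P (⋂ i, X i ⁻¹' {m i}) = ENNReal.ofReal (F m) := by
    intro m
    rw [hindep.meas_iInter (fun i => ⟨{m i}, measurableSet_singleton _, rfl⟩)]
    rw [hFdef]
    rw [ENNReal.ofReal_prod_of_nonneg (fun i _ => by positivity)]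
    apply Finset.prod_congr rfl
    intro i _
    have h := hdist i (m i)
    have hset : X i ⁻¹' {m i} = {ω | X i ω = m i} := rfl
    rw [hset, h, hqdef]
  have step1 : P {ω | (∑ i, (X i ω : ℝ)) / n < (1 - δ) * μ}
      ≤ ∑ k ∈ Finset.range K, ∑ m ∈ Finset.Nat.antidiagonalTuple n k,
          ENNReal.ofReal (F m) := by
    have hsub : {ω | (∑ i, (X i ω : ℝ)) / n < (1 - δ) * μ}
        ⊆ ⋃ k ∈ Finset.range K, {ω | (∑ i, X i ω) = k} := by
      intro ω hω
      simp only [Set.mem_setOf_eq] at hω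
      have hcast : (∑ i, (X i ω : ℝ)) = ((∑ i, X i ω : ℕ) : ℝ) := by push_cast; rfl
      rw [hcast, div_lt_iff₀ (by exact_mod_cast hn : (0:ℝ) < n)] at hω
      have hlt : (∑ i, X i ω) < K := by
        rw [hKdef]
        exact Nat.lt_ceil.2 (by rw [hadef]; linarith)
      simp only [Set.mem_iUnion, Finset.mem_range, Set.mem_setOf_eq]
      exact ⟨∑ i, X i ω, hlt, rfl⟩
    calc P {ω | (∑ i, (X i ω : ℝ)) / n < (1 - δ) * μ}
        ≤ P (⋃ k ∈ Finset.range K, {ω | (∑ i, X i ω) = k}) := measure_mono hsub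
      _ ≤ ∑ k ∈ Finset.range K, P {ω | (∑ i, X i ω) = k} :=
          measure_biUnion_finset_le _ _
      _ ≤ ∑ k ∈ Finset.range K, ∑ m ∈ Finset.Nat.antidiagonalTuple n k,
            ENNReal.ofReal (F m) := by
          apply Finset.sum_le_sum
          intro k _
          have hsub2 : {ω | (∑ i, X i ω) = k}
              ⊆ ⋃ m ∈ Finset.Nat.antidiagonalTuple n k, ⋂ i, X i ⁻¹' {m i} := by
            intro ω hω
            simp only [Set.mem_setOf_eq] at hω
            simp only [Set.mem_iUnion]
            refine ⟨fun i => X i ω, Finset.Nat.mem_antidiagonalTuple.2 hω, ?_⟩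
            simp only [Set.mem_iInter, Set.mem_preimage, Set.mem_singleton_iff]
            intro i; trivial
          calc P {ω | (∑ i, X i ω) = k}
              ≤ P (⋃ m ∈ Finset.Nat.antidiagonalTuple n k, ⋂ i, X i ⁻¹' {m i}) :=
                measure_mono hsub2
            _ ≤ ∑ m ∈ Finset.Nat.antidiagonalTuple n k, P (⋂ i, X i ⁻¹' {m i}) :=
                measure_biUnion_finset_le _ _
            _ = ∑ m ∈ Finset.Nat.antidiagonalTuple n k, ENNReal.ofReal (F m) := by
                exact Finset.sum_congr rfl fun m _ => hval m
  -- convert to a single ofReal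
  have step2 : (∑ k ∈ Finset.range K, ∑ m ∈ Finset.Nat.antidiagonalTuple n k,
        ENNReal.ofReal (F m))
      = ENNReal.ofReal (∑ k ∈ Finset.range K,
          ∑ m ∈ Finset.Nat.antidiagonalTuple n k, F m) := by
    rw [ENNReal.ofReal_sum_of_nonneg]
    · apply Finset.sum_congr rfl
      intro k _
      rw [ENNReal.ofReal_sum_of_nonneg]
      intro m _
      rw [hFdef]; positivity
    · intro k _
      apply Finset.sum_nonneg
      intro m _
      rw [hFdef]; positivity
  -- real side
  have hFG : ∀ k ∈ Finset.range K, ∀ m ∈ Finset.Nat.antidiagonalTuple n k,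
      F m ≤ Real.exp (t*a) * G m := by
    intro k hk m hm
    have hsumm : ∑ i, m i = k := Finset.Nat.mem_antidiagonalTuple.1 hm
    have hF : F m = q^k * p^n := by
      rw [hFdef]
      simp only
      rw [Finset.prod_mul_distrib, Finset.prod_pow_eq_pow_sum, hsumm, Finset.prod_const,
        Finset.card_univ, Fintype.card_fin]
    have hG : G m = r^k * p^n := by
      rw [hGdef]
      simp only
      rw [Finset.prod_mul_distrib, Finset.prod_pow_eq_pow_sum, hsumm, Finset.prod_const,
        Finset.card_univ, Fintype.card_fin]
    have hka : (k:ℝ) ≤ a := le_of_lt (Nat.lt_ceil.1 (Finset.mem_range.1 hk))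
    have hq_eq : q^k = Real.exp (t*(k:ℝ)) * r^k := by
      have h1 : r^k = q^k * s^k := by rw [hrdef, mul_pow]
      have hsk : s^k = Real.exp ((k:ℝ)*(-t)) := by
        rw [Real.exp_nat_mul, hexp]
      rw [h1, hsk]
      rw [show Real.exp (t*(k:ℝ)) = (Real.exp ((k:ℝ)*(-t)))⁻¹ by
        rw [← Real.exp_neg]; congr 1; ring]
      field_simp
    rw [hF, hG]
    rw [hq_eq]
    have hexp_le : Real.exp (t*(k:ℝ)) ≤ Real.exp (t*a) :=
      Real.exp_le_exp.2 (mul_le_mul_of_nonneg_left hka ht0)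
    have hrp : 0 ≤ r^k * p^n := by positivity
    calc Real.exp (t*(k:ℝ)) * r^k * p^n = Real.exp (t*(k:ℝ)) * (r^k * p^n) := by ring
      _ ≤ Real.exp (t*a) * (r^k * p^n) := mul_le_mul_of_nonneg_right hexp_le hrp
      _ = Real.exp (t*a) * (r^k * p^n) := rfl
  have hgeom : (∑ j ∈ Finset.range K, r^j * p) ≤ 1 - v := by
    have h1r : 1 - r = 1/(1+ν) := by
      rw [hr_eq]
      field_simp
      ring
    have hsumr : (∑ j ∈ Finset.range K, r^j) ≤ 1 + ν := by
      have hrne : r ≠ 1 := ne_of_lt hr1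
      rw [geom_sum_eq hrne]
      rw [div_le_iff_of_neg (by linarith : r - 1 < 0)]
      have hrK : 0 ≤ r^K := pow_nonneg hr0 K
      have : (1+ν) * (r-1) = -(1-r)*(1+ν) := by ring
      rw [this, h1r]
      have : -(1/(1+ν))*(1+ν) = -1 := by field_simp
      rw [this]
      linarith
    calc (∑ j ∈ Finset.range K, r^j * p) = (∑ j ∈ Finset.range K, r^j) * p := by
          rw [Finset.sum_mul]
      _ ≤ (1+ν) * p := mul_le_mul_of_nonneg_right hsumr hp0.le
      _ = 1 - v := by rw [← hpν]; ring
  have hGsum : (∑ k ∈ Finset.range K, ∑ m ∈ Finset.Nat.antidiagonalTuple n k, G m)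
      ≤ (1-v)^n := by
    have hdisj : Set.PairwiseDisjoint ↑(Finset.range K)
        (fun k => Finset.Nat.antidiagonalTuple n k) := by
      intro k1 _ k2 _ hne
      simp only [Function.onFun]
      rw [Finset.disjoint_left]
      intro m hm1 hm2
      exact hne (by
        rw [← Finset.Nat.mem_antidiagonalTuple.1 hm1, Finset.Nat.mem_antidiagonalTuple.1 hm2])
    have hsubset : (Finset.range K).biUnion (fun k => Finset.Nat.antidiagonalTuple n k)
        ⊆ Fintype.piFinset (fun _ : Fin n => Finset.range K) := by
      intro m hm
      rw [Finset.mem_biUnion] at hm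
      obtain ⟨k, hk, hmk⟩ := hm
      rw [Fintype.mem_piFinset]
      intro i
      rw [Finset.mem_range]
      calc m i ≤ ∑ j, m j :=
            Finset.single_le_sum (fun j _ => Nat.zero_le _) (Finset.mem_univ i)
        _ = k := Finset.Nat.mem_antidiagonalTuple.1 hmk
        _ < K := Finset.mem_range.1 hk
    calc (∑ k ∈ Finset.range K, ∑ m ∈ Finset.Nat.antidiagonalTuple n k, G m)
        = ∑ m ∈ (Finset.range K).biUnion (fun k => Finset.Nat.antidiagonalTuple n k), G m :=
          (Finset.sum_biUnion hdisj).symm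
      _ ≤ ∑ m ∈ Fintype.piFinset (fun _ : Fin n => Finset.range K), G m :=
          Finset.sum_le_sum_of_subset_of_nonneg hsubset
            (fun m _ _ => by rw [hGdef]; simp only; positivity)
      _ = (∑ j ∈ Finset.range K, r^j * p)^n := by
          simp only [hGdef]
          have hps := Finset.prod_univ_sum (fun _ : Fin n => Finset.range K)
            (fun (_ : Fin n) (j : ℕ) => r^j * p)
          rw [← hps, Finset.prod_const, Finset.card_univ, Fintype.card_fin]
      _ ≤ (1-v)^n := pow_le_pow_left₀ (Finset.sum_nonneg fun j _ => mul_nonneg (pow_nonneg hr0 j) hp0.le) hgeom n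
  have hreal : (∑ k ∈ Finset.range K, ∑ m ∈ Finset.Nat.antidiagonalTuple n k, F m)
      ≤ Real.exp (t*a) * (1-v)^n := by
    calc (∑ k ∈ Finset.range K, ∑ m ∈ Finset.Nat.antidiagonalTuple n k, F m)
        ≤ ∑ k ∈ Finset.range K, ∑ m ∈ Finset.Nat.antidiagonalTuple n k,
            Real.exp (t*a) * G m :=
          Finset.sum_le_sum (fun k hk => Finset.sum_le_sum (fun m hm => hFG k hk m hm))
      _ = Real.exp (t*a) * ∑ k ∈ Finset.range K, ∑ m ∈ Finset.Nat.antidiagonalTuple n k, G m := by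
          simp_rw [Finset.mul_sum]
      _ ≤ Real.exp (t*a) * (1-v)^n :=
          mul_le_mul_of_nonneg_left hGsum (Real.exp_nonneg _)
  have hfinal : Real.exp (t*a) * (1-v)^n
      ≤ Real.exp (-((n * δ ^ 2 * μ) / (6 * (1 + μ) ^ 2)) * (3 - 2 * δ * μ / (1 + μ))) := by
    have hpow : (1-v)^n = Real.exp ((n:ℝ) * Real.log (1-v)) := by
      rw [Real.exp_nat_mul, Real.exp_log h1v]
    rw [hpow, ← Real.exp_add]
    apply Real.exp_le_exp.2
    have hlogs : Real.log s = Real.log (1-δ) - Real.log (1-v) := by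
      rw [hsdef, Real.log_div (ne_of_gt hδ1') (ne_of_gt h1v)]
    have hEI := exponent_ineq hδ0 hδ1 hμ0 hμ1
    rw [← hvdef, ← hνdef] at hEI
    have hn' : (0:ℝ) ≤ (n:ℝ) := Nat.cast_nonneg n
    have heq : t*a + (n:ℝ)*Real.log (1-v)
        = (n:ℝ) * (-ν * Real.log (1-δ) + (1+ν) * Real.log (1-v)) := by
      rw [htdef, hlogs, hadef]
      ring
    rw [heq]
    have hmul := mul_le_mul_of_nonneg_left hEI hn'
    calc (n:ℝ) * (-ν * Real.log (1-δ) + (1+ν) * Real.log (1-v)) ≤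
        (n:ℝ) * (-((δ^2*μ)/(6*(1+μ)^2))*(3 - 2*δ*μ/(1+μ))) := hmul
      _ = -((n * δ ^ 2 * μ) / (6 * (1 + μ) ^ 2)) * (3 - 2 * δ * μ / (1 + μ)) := by
          ring
  calc P {ω | (∑ i, (X i ω : ℝ)) / n < (1 - δ) * μ}
      ≤ ∑ k ∈ Finset.range K, ∑ m ∈ Finset.Nat.antidiagonalTuple n k,
          ENNReal.ofReal (F m) := step1
    _ = ENNReal.ofReal (∑ k ∈ Finset.range K,
          ∑ m ∈ Finset.Nat.antidiagonalTuple n k, F m) := step2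
    _ ≤ ENNReal.ofReal
          (Real.exp (-((n * δ ^ 2 * μ) / (6 * (1 + μ) ^ 2))
            * (3 - 2 * δ * μ / (1 + μ)))) :=
        ENNReal.ofReal_le_ofReal (hreal.trans hfinal)
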